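/- Let P ∈ S₊ⁿ, A_cl ∈ ℝⁿˣⁿ, B_cl ∈ ℝⁿˣᵐ, Θ ∈ S₊ᵐ, G ∈ ℝⁿˣᵐ, η > 0. If the block matrix [[⟨PA_cl⟩ + 2ηP, PB_cl + G], [B_clᵀP + Gᵀ, -2Θ]] ⪯ 0, then for every Δx ∈ ℝⁿ and ΔΨ ∈ ℝᵐ with ΔΨᵀΘΔΨ ≤ ΔΨᵀGᵀΔx, one has ΔxᵀP(A_clΔx + B_clΔΨ) ≤ -η ΔxᵀPΔx. -/

import Mathlib

open Matrix

theorem stmt8 {n m : ℕ} (P Acl : Matrix (Fin n) (Fin n) ℝ) (Bcl G : Matrix (Fin n) (Fin m) ℝ)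
    (Θ : Matrix (Fin m) (Fin m) ℝ) (η : ℝ) (hη : 0 < η) (hP : P.PosDef) (hΘ : Θ.PosDef)
    (hLMI : (-(Matrix.fromBlocks
        (P * Acl + (P * Acl)ᵀ + (2 * η) • P) (P * Bcl + G)
        (P * Bcl + G)ᵀ (-(2 : ℝ) • Θ))).PosSemidef) :
    ∀ (Δx : Fin n → ℝ) (ΔΨ : Fin m → ℝ),
      ΔΨ ⬝ᵥ Θ.mulVec ΔΨ ≤ ΔΨ ⬝ᵥ Gᵀ.mulVec Δx →
      Δx ⬝ᵥ P.mulVec (Acl.mulVec Δx + Bcl.mulVec ΔΨ) ≤ -η * (Δx ⬝ᵥ P.mulVec Δx) := by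
  intro Δx ΔΨ hsec
  have h := hLMI.dotProduct_mulVec_nonneg (Sum.elim Δx ΔΨ)
  rw [star_trivial, neg_mulVec, dotProduct_neg, fromBlocks_mulVec] at h
  simp only [sumElim_dotProduct_sumElim, Sum.elim_comp_inl, Sum.elim_comp_inr, add_mulVec, dotProduct_add, smul_mulVec,
    dotProduct_smul, neg_smul, neg_mulVec, dotProduct_neg, smul_eq_mul] at h
  have h1 : Δx ⬝ᵥ (P * Acl)ᵀ.mulVec Δx = Δx ⬝ᵥ (P * Acl).mulVec Δx := by
    rw [dotProduct_mulVec, vecMul_transpose, dotProduct_comm]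
  have h2 : ΔΨ ⬝ᵥ (P * Bcl + G)ᵀ.mulVec Δx = Δx ⬝ᵥ (P * Bcl + G).mulVec ΔΨ := by
    rw [dotProduct_mulVec, vecMul_transpose, dotProduct_comm]
  have h3 : Δx ⬝ᵥ (P * Acl).mulVec Δx = Δx ⬝ᵥ P.mulVec (Acl.mulVec Δx) := by
    rw [← mulVec_mulVec]
  have h4 : Δx ⬝ᵥ (P * Bcl).mulVec ΔΨ = Δx ⬝ᵥ P.mulVec (Bcl.mulVec ΔΨ) := by
    rw [← mulVec_mulVec]
  have h5 : ΔΨ ⬝ᵥ Gᵀ.mulVec Δx = Δx ⬝ᵥ G.mulVec ΔΨ := by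
    rw [dotProduct_mulVec, vecMul_transpose, dotProduct_comm]
  rw [h2, add_mulVec, dotProduct_add] at h
  rw [mulVec_add, dotProduct_add]
  nlinarith [h, h1, h3, h4, h5, hsec]
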